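/- Let K be a compact metric space, let ρ be a finite nonnegative Borel measure on K, and let v : K → ℝ^d be a Borel measurable vector field with ∫_K |v|² dρ < ∞. Let m be the ℝ^d-valued vector measure with density v with respect to ρ, i.e. m(A) = ∫_A v dρ for Borel sets A. Then B₂(ρ, m) = (1/2) ∫_K |v|² dρ. -/

import Mathlib

open Filter MeasureTheory Topology

/-- The integral of a function against a finite signed measure, defined via the
Jordan decomposition: `∫ f dμ = ∫ f dμ⁺ − ∫ f dμ⁻`. -/
noncomputable def sintegral {K : Type*} [MeasurableSpace K]
    (μ : MeasureTheory.SignedMeasure K) (f : K → ℝ) : ℝ :=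
  (∫ x, f x ∂μ.toJordanDecomposition.posPart) -
    (∫ x, f x ∂μ.toJordanDecomposition.negPart)

/-- The Benamou–Brenier functional
`B₂(ρ, m) = sup { ∫ a dρ + ∫ b · dm : a, b continuous, a(x) + |b(x)|²/2 ≤ 0 ∀x }`,
where the `ℝ^d`-valued vector measure `m` is given through its `d` signed-measure
components and the supremum is taken in `ℝ ∪ {+∞}`. -/
noncomputable def BB2 {K : Type*} [TopologicalSpace K] [MeasurableSpace K] (d : ℕ)
    (ρ : MeasureTheory.SignedMeasure K) (m : Fin d → MeasureTheory.SignedMeasure K) : EReal :=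
  ⨆ ab : {ab : C(K, ℝ) × C(K, EuclideanSpace ℝ (Fin d)) //
      ∀ x : K, ab.1 x + ‖ab.2 x‖ ^ 2 / 2 ≤ 0},
    ((sintegral ρ (ab : C(K, ℝ) × C(K, EuclideanSpace ℝ (Fin d))).1 +
        ∑ i : Fin d, sintegral (m i)
          (fun x => (ab : C(K, ℝ) × C(K, EuclideanSpace ℝ (Fin d))).2 x i) : ℝ) : EReal)

lemma sintegral_eq_of_eq_sub {K : Type*} [MeasurableSpace K]
    (μ ν : Measure K) [IsFiniteMeasure μ] [IsFiniteMeasure ν]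
    {s : SignedMeasure K} (hs : s = μ.toSignedMeasure - ν.toSignedMeasure)
    {f : K → ℝ} (hfμ : Integrable f μ) (hfν : Integrable f ν)
    (hfp : Integrable f s.toJordanDecomposition.posPart)
    (hfn : Integrable f s.toJordanDecomposition.negPart) :
    sintegral s f = (∫ x, f x ∂μ) - ∫ x, f x ∂ν := by
  have h1 : s.toJordanDecomposition.posPart.toSignedMeasure -
      s.toJordanDecomposition.negPart.toSignedMeasure =
      μ.toSignedMeasure - ν.toSignedMeasure := by
    rw [← hs]
    conv_rhs => rw [← s.toSignedMeasure_toJordanDecomposition]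
    rfl
  have h2 : s.toJordanDecomposition.posPart.toSignedMeasure + ν.toSignedMeasure =
      μ.toSignedMeasure + s.toJordanDecomposition.negPart.toSignedMeasure :=
    sub_eq_sub_iff_add_eq_add.mp h1
  rw [← Measure.toSignedMeasure_add, ← Measure.toSignedMeasure_add,
    Measure.toSignedMeasure_eq_toSignedMeasure_iff] at h2
  have h3 : (∫ x, f x ∂s.toJordanDecomposition.posPart) + ∫ x, f x ∂ν =
      (∫ x, f x ∂μ) + ∫ x, f x ∂s.toJordanDecomposition.negPart := by
    rw [← integral_add_measure hfp hfν, ← integral_add_measure hfμ hfn, h2]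
  unfold sintegral
  linarith

lemma continuousMap_integrable {K : Type*} [TopologicalSpace K] [CompactSpace K]
    [MeasurableSpace K] [OpensMeasurableSpace K] (f : C(K, ℝ)) (m : Measure K)
    [IsFiniteMeasure m] : Integrable f m :=
  (BoundedContinuousFunction.mkOfCompact f).integrable m

lemma sintegral_toSignedMeasure {K : Type*} [TopologicalSpace K] [CompactSpace K]
    [MeasurableSpace K] [OpensMeasurableSpace K] (ρ : Measure K) [IsFiniteMeasure ρ]
    (f : C(K, ℝ)) : sintegral ρ.toSignedMeasure f = ∫ x, f x ∂ρ := by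
  rw [sintegral_eq_of_eq_sub ρ 0 (by rw [Measure.toSignedMeasure_zero]; abel)
    (continuousMap_integrable f ρ) (continuousMap_integrable f 0)
    (continuousMap_integrable f _) (continuousMap_integrable f _)]
  simp

lemma sintegral_withDensityᵥ {K : Type*} [TopologicalSpace K] [CompactSpace K]
    [MeasurableSpace K] [OpensMeasurableSpace K] (ρ : Measure K) [IsFiniteMeasure ρ]
    {g : K → ℝ} (hg : Measurable g) (hgi : Integrable g ρ) (f : C(K, ℝ)) :
    sintegral (ρ.withDensityᵥ g) f = ∫ x, f x * g x ∂ρ := by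
  haveI := isFiniteMeasure_withDensity_ofReal hgi.2
  haveI := isFiniteMeasure_withDensity_ofReal hgi.neg.2
  have hbd : ∃ C, ∀ x, ‖f x‖ ≤ C :=
    ⟨‖BoundedContinuousFunction.mkOfCompact f‖, fun x =>
      (BoundedContinuousFunction.mkOfCompact f).norm_coe_le_norm x⟩
  have hip : Integrable (fun x => f x * max (g x) 0) ρ :=
    hgi.pos_part.bdd_mul f.continuous.measurable.aestronglyMeasurable (Eventually.of_forall hbd.choose_spec)
  have hin : Integrable (fun x => f x * max (-g x) 0) ρ :=
    hgi.neg.pos_part.bdd_mul f.continuous.measurable.aestronglyMeasurable (Eventually.of_forall hbd.choose_spec)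
  have e1 : (∫ x, f x ∂(ρ.withDensity fun x => ENNReal.ofReal (g x))) =
      ∫ x, f x * max (g x) 0 ∂ρ := by
    rw [show (fun x => ENNReal.ofReal (g x)) = (fun x => ((g x).toNNReal : ENNReal)) from rfl,
      integral_withDensity_eq_integral_smul hg.real_toNNReal]
    congr 1; ext x
    simp [NNReal.smul_def, Real.coe_toNNReal']
    ring
  have e2 : (∫ x, f x ∂(ρ.withDensity fun x => ENNReal.ofReal (-g x))) =
      ∫ x, f x * max (-g x) 0 ∂ρ := by
    rw [show (fun x => ENNReal.ofReal (-g x)) = (fun x => ((-g x).toNNReal : ENNReal)) from rfl,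
      integral_withDensity_eq_integral_smul (show Measurable fun x => (-g x).toNNReal from hg.neg.real_toNNReal)]
    congr 1; ext x
    simp [NNReal.smul_def, Real.coe_toNNReal']
    ring
  rw [sintegral_eq_of_eq_sub (ρ.withDensity fun x => ENNReal.ofReal (g x))
    (ρ.withDensity fun x => ENNReal.ofReal (-g x))
    (withDensityᵥ_eq_withDensity_pos_part_sub_withDensity_neg_part hgi)
    (continuousMap_integrable f _) (continuousMap_integrable f _)
    (continuousMap_integrable f _) (continuousMap_integrable f _), e1, e2, ← integral_sub hip hin]
  congr 1; ext x
  have h := max_zero_sub_max_neg_zero_eq_self (g x)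
  linear_combination (f x) * h

lemma euclid_coord_le {d : ℕ} (x : EuclideanSpace ℝ (Fin d)) (i : Fin d) : |x i| ≤ ‖x‖ := by
  rw [EuclideanSpace.norm_eq]
  have h : |x i| = Real.sqrt (‖x i‖ ^ 2) := by
    rw [Real.sqrt_sq (norm_nonneg _), Real.norm_eq_abs]
  rw [h]
  exact Real.sqrt_le_sqrt (Finset.single_le_sum (f := fun j => ‖x j‖ ^ 2)
    (fun j _ => by positivity) (Finset.mem_univ i))

/-- If `ρ` is a finite nonnegative Borel measure on a compact metric space, `v` is a
Borel vector field with `∫ |v|² dρ < ∞`, and `m` is the vector measure with density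
`v` with respect to `ρ`, then `B₂(ρ, m) = (1/2) ∫ |v|² dρ`. -/
theorem stmt5 {K : Type*} [MetricSpace K] [CompactSpace K]
    [MeasurableSpace K] [BorelSpace K] (d : ℕ)
    (ρ : Measure K) [IsFiniteMeasure ρ]
    (v : K → EuclideanSpace ℝ (Fin d)) (hv : Measurable v)
    (hint : Integrable (fun x => ‖v x‖ ^ 2) ρ) :
    BB2 d ρ.toSignedMeasure (fun i => ρ.withDensityᵥ (fun x => v x i)) =
      (((1 / 2) * ∫ x, ‖v x‖ ^ 2 ∂ρ : ℝ) : EReal) := by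
  set c : ℝ := (1 / 2) * ∫ x, ‖v x‖ ^ 2 ∂ρ with hc
  set T := {ab : C(K, ℝ) × C(K, EuclideanSpace ℝ (Fin d)) //
      ∀ x : K, ab.1 x + ‖ab.2 x‖ ^ 2 / 2 ≤ 0} with hT
  set val : T → ℝ := fun ab => sintegral ρ.toSignedMeasure ab.1.1 +
      ∑ i : Fin d, sintegral (ρ.withDensityᵥ fun x => v x i) (fun x => ab.1.2 x i) with hvaldef
  have hBB : BB2 d ρ.toSignedMeasure (fun i => ρ.withDensityᵥ (fun x => v x i)) =
      ⨆ ab : T, ((val ab : ℝ) : EReal) := rfl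
  rw [hBB]
  have hvsm : AEStronglyMeasurable v ρ := hv.aestronglyMeasurable
  have hv2 : MemLp v 2 ρ := (memLp_two_iff_integrable_sq_norm hvsm).2 hint
  have hvi : Integrable v ρ := hv2.integrable one_le_two
  have hgm : ∀ i : Fin d, Measurable fun x => v x i := fun i =>
    (measurable_pi_apply i).comp ((WithLp.measurable_ofLp ..).comp hv)
  have hgi : ∀ i : Fin d, Integrable (fun x => v x i) ρ := fun i =>
    hvi.norm.mono' (hgm i).aestronglyMeasurable (Eventually.of_forall fun x => by
      simpa [Real.norm_eq_abs] using euclid_coord_le (v x) i)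
  have hbC : ∀ b : C(K, EuclideanSpace ℝ (Fin d)), ∃ C, ∀ x, ‖b x‖ ≤ C := fun b =>
    ⟨‖BoundedContinuousFunction.mkOfCompact b‖, fun x =>
      (BoundedContinuousFunction.mkOfCompact b).norm_coe_le_norm x⟩
  have hinner : ∀ b : C(K, EuclideanSpace ℝ (Fin d)),
      Integrable (fun x => (inner ℝ (v x) (b x) : ℝ)) ρ := by
    intro b
    obtain ⟨C, hC⟩ := hbC b
    refine (hvi.norm.const_mul C).mono'
      (hvsm.inner b.continuous.aestronglyMeasurable) (Eventually.of_forall fun x => ?_)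
    calc ‖(inner ℝ (v x) (b x) : ℝ)‖ ≤ ‖v x‖ * ‖b x‖ := norm_inner_le_norm _ _
      _ ≤ C * ‖v x‖ := by nlinarith [norm_nonneg (v x), hC x, norm_nonneg (b x)]
  have hsum : ∀ b : C(K, EuclideanSpace ℝ (Fin d)),
      (∑ i : Fin d, sintegral (ρ.withDensityᵥ fun x => v x i) (fun x => b x i)) =
        ∫ x, (inner ℝ (v x) (b x) : ℝ) ∂ρ := by
    intro b
    obtain ⟨C, hC⟩ := hbC b
    have hbci : ∀ i : Fin d, Continuous fun x => b x i := fun i =>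
      (continuous_apply i).comp ((PiLp.continuous_ofLp 2 _).comp b.continuous)
    have hbi : ∀ i : Fin d, Integrable (fun x => b x i * v x i) ρ := fun i =>
      (hgi i).bdd_mul (hbci i).measurable.aestronglyMeasurable
        (Eventually.of_forall fun x => by
          have := euclid_coord_le (b x) i
          simpa [Real.norm_eq_abs] using this.trans (hC x))
    have e : ∀ i : Fin d, sintegral (ρ.withDensityᵥ fun x => v x i) (fun x => b x i) =
        ∫ x, b x i * v x i ∂ρ := fun i =>
      sintegral_withDensityᵥ ρ (hgm i) (hgi i) ⟨fun x => b x i, hbci i⟩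
    simp_rw [e]
    rw [← integral_finset_sum Finset.univ (fun i _ => hbi i)]
    congr 1
  have hval : ∀ ab : T, val ab = (∫ x, ab.1.1 x ∂ρ) + ∫ x, (inner ℝ (v x) (ab.1.2 x) : ℝ) ∂ρ := by
    intro ab
    rw [hvaldef]
    simp only
    rw [sintegral_toSignedMeasure ρ ab.1.1, hsum ab.1.2]
  have hb2 : ∀ b : C(K, EuclideanSpace ℝ (Fin d)), Integrable (fun x => ‖b x‖ ^ 2) ρ := fun b =>
    continuousMap_integrable ⟨fun x => ‖b x‖ ^ 2, (b.continuous.norm.pow 2)⟩ ρ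
  have hexp : ∀ b : C(K, EuclideanSpace ℝ (Fin d)), (fun x => ‖v x - b x‖ ^ 2) =
      fun x => ‖v x‖ ^ 2 - 2 * (inner ℝ (v x) (b x) : ℝ) + ‖b x‖ ^ 2 :=
    fun b => funext fun x => norm_sub_sq_real _ _
  have hvb2 : ∀ b : C(K, EuclideanSpace ℝ (Fin d)),
      Integrable (fun x => ‖v x - b x‖ ^ 2) ρ := fun b => by
    rw [hexp b]; exact (hint.sub ((hinner b).const_mul 2)).add (hb2 b)
  have hkey : ∀ b : C(K, EuclideanSpace ℝ (Fin d)),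
      (∫ x, (inner ℝ (v x) (b x) : ℝ) ∂ρ) - ∫ x, ‖b x‖ ^ 2 / 2 ∂ρ
        = c - (1 / 2) * ∫ x, ‖v x - b x‖ ^ 2 ∂ρ := by
    intro b
    have i2 : Integrable (fun x => ‖v x‖ ^ 2 - 2 * (inner ℝ (v x) (b x) : ℝ)) ρ := by
      exact hint.sub ((hinner b).const_mul 2)
    have e : ∫ x, ‖v x - b x‖ ^ 2 ∂ρ = (∫ x, ‖v x‖ ^ 2 ∂ρ)
        - 2 * (∫ x, (inner ℝ (v x) (b x) : ℝ) ∂ρ) + ∫ x, ‖b x‖ ^ 2 ∂ρ := by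
      rw [hexp b, integral_add i2 (hb2 b),
        integral_sub hint ((hinner b).const_mul 2), integral_const_mul]
    have e2 : ∫ x, ‖b x‖ ^ 2 / 2 ∂ρ = (∫ x, ‖b x‖ ^ 2 ∂ρ) / 2 := integral_div 2 _
    rw [e2, hc]
    linarith
  have hub : ∀ ab : T, val ab ≤ c := by
    rintro ⟨⟨a, b⟩, hab⟩
    rw [hval ⟨⟨a, b⟩, hab⟩]
    simp only
    have h1 : (∫ x, a x ∂ρ) ≤ ∫ x, -(‖b x‖ ^ 2 / 2) ∂ρ :=
      integral_mono (continuousMap_integrable a ρ) ((hb2 b).div_const 2).neg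
        (fun x => by have := hab x; simp only at this ⊢; linarith)
    have h2 : ∫ x, -(‖b x‖ ^ 2 / 2) ∂ρ = -∫ x, ‖b x‖ ^ 2 / 2 ∂ρ := integral_neg _
    have h3 := hkey b
    have h4 : 0 ≤ ∫ x, ‖v x - b x‖ ^ 2 ∂ρ := integral_nonneg fun x => by positivity
    linarith
  have hlb : ∀ ε : ℝ, 0 < ε → ∃ ab : T, c - ε ≤ val ab := by
    intro ε hε
    have hv2' : MemLp v (ENNReal.ofReal 2) ρ := by
      rw [show ENNReal.ofReal 2 = 2 by norm_num]; exact hv2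
    obtain ⟨g, hg, -⟩ := hv2'.exists_boundedContinuous_integral_rpow_sub_le two_pos hε
    simp only [show (2 : ℝ) = ((2 : ℕ) : ℝ) by norm_num, Real.rpow_natCast] at hg
    set b : C(K, EuclideanSpace ℝ (Fin d)) := g.toContinuousMap with hb
    set a : C(K, ℝ) := ⟨fun x => -(‖g x‖ ^ 2 / 2), ((g.continuous.norm.pow 2).div_const 2).neg⟩ with ha
    have hab : ∀ x : K, a x + ‖b x‖ ^ 2 / 2 ≤ 0 := fun x => by
      simp [ha, hb]
    refine ⟨⟨⟨a, b⟩, hab⟩, ?_⟩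
    rw [hval ⟨⟨a, b⟩, hab⟩]
    simp only
    have h1 : (∫ x, a x ∂ρ) = -∫ x, ‖b x‖ ^ 2 / 2 ∂ρ := by
      rw [ha]
      simpa [hb] using integral_neg fun x => ‖b x‖ ^ 2 / 2
    have h3 := hkey b
    have h5 : ∫ x, ‖v x - b x‖ ^ 2 ∂ρ ≤ ε := hg
    linarith
  apply le_antisymm
  · exact iSup_le fun ab => EReal.coe_le_coe_iff.2 (hub ab)
  · refine le_of_forall_lt fun z hz => ?_
    induction z using EReal.rec with
    | bot =>
        obtain ⟨ab, -⟩ := hlb 1 one_pos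
        exact lt_of_lt_of_le (EReal.bot_lt_coe (val ab))
          (le_iSup (fun ab : T => ((val ab : ℝ) : EReal)) ab)
    | coe r =>
        have hr : r < c := EReal.coe_lt_coe_iff.1 hz
        obtain ⟨ab, hab⟩ := hlb ((c - r) / 2) (by linarith)
        have h6 : r < val ab := by
          have h7 : c - (c - r) / 2 ≤ val ab := hab
          generalize hw : val ab = w at h7 ⊢
          clear_value c
          linarith
        exact lt_of_lt_of_le (EReal.coe_lt_coe_iff.2 h6)
          (le_iSup (fun ab : T => ((val ab : ℝ) : EReal)) ab)
    | top => exact absurd hz (not_top_lt)
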